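/- With H₁ = [[1, -A⁴],[0, -A⁴]] and H₂ = [[-A⁴, 0],[-1, 1]] over ℤ[A, A⁻¹], the rescaled matrices G₁ = A⁻²H₁ and G₂ = A⁻²H₂ satisfy det(Gᵢ) = -1 and (G₁G₂)³ = I (up to the sphere relation): verify that G₁G₂G₁²G₂G₁ = I and (G₁G₂G₁)⁴ = I, where we use ρ(ω₁)=ρ(ω₃)=G₁, ρ(ω₂)=G₂. -/
import Mathlib
open LaurentPolynomial

private theorem smul_fin2' (r : LaurentPolynomial ℤ) (a b c d : LaurentPolynomial ℤ) :
    r • !![a, b; c, d] = !![r*a, r*b; r*c, r*d] := by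
  ext i j; fin_cases i <;> fin_cases j <;> simp [Matrix.smul_apply, smul_eq_mul]

private theorem LM1 : (!![1, -(T 4); 0, -(T 4)] : Matrix (Fin 2) (Fin 2) (LaurentPolynomial ℤ)) *
    !![-(T 4), 0; -1, 1] = !![0, -(T 4); T 4, -(T 4)] := by
  rw [Matrix.mul_fin_two]
  simp only [mul_neg, neg_mul, neg_neg, mul_one, one_mul, zero_mul, mul_zero, zero_add, add_zero,
    neg_add_cancel, add_neg_cancel, neg_zero]

private theorem LM2 : (!![0, -(T 4); T 4, -(T 4)] : Matrix (Fin 2) (Fin 2) (LaurentPolynomial ℤ)) *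
    !![1, -(T 4); 0, -(T 4)] = !![0, T 8; T 4, 0] := by
  rw [Matrix.mul_fin_two]
  simp only [mul_neg, neg_mul, neg_neg, mul_one, one_mul, zero_mul, mul_zero, zero_add, add_zero,
    ← T_add, neg_add_cancel, add_neg_cancel]
  norm_num

private theorem LM3 : (!![0, T 8; T 4, 0] : Matrix (Fin 2) (Fin 2) (LaurentPolynomial ℤ)) *
    !![0, T 8; T 4, 0] = !![T 12, 0; 0, T 12] := by
  rw [Matrix.mul_fin_two]
  simp only [mul_zero, zero_mul, zero_add, add_zero, ← T_add]
  norm_num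

private theorem LM4 : (!![T 12, 0; 0, T 12] : Matrix (Fin 2) (Fin 2) (LaurentPolynomial ℤ)) *
    !![T 12, 0; 0, T 12] = !![T 24, 0; 0, T 24] := by
  rw [Matrix.mul_fin_two]
  simp only [mul_zero, zero_mul, zero_add, add_zero, ← T_add]
  norm_num

private theorem LM5 (n : ℤ) : (T (-n) : LaurentPolynomial ℤ) • (!![T n, 0; 0, T n] :
    Matrix (Fin 2) (Fin 2) (LaurentPolynomial ℤ)) = 1 := by
  rw [smul_fin2', Matrix.one_fin_two]
  simp only [mul_zero, ← T_add, neg_add_cancel, T_zero]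

theorem stmt_13 :
    let a : LaurentPolynomial ℤ := T 1
    let G₁ : Matrix (Fin 2) (Fin 2) (LaurentPolynomial ℤ) :=
      (T (-2) : LaurentPolynomial ℤ) • !![1, -(a ^ 4); 0, -(a ^ 4)]
    let G₂ : Matrix (Fin 2) (Fin 2) (LaurentPolynomial ℤ) :=
      (T (-2) : LaurentPolynomial ℤ) • !![-(a ^ 4), 0; -1, 1]
    G₁.det = -1 ∧ G₂.det = -1 ∧
      G₁ * G₂ * G₁ ^ 2 * G₂ * G₁ = 1 ∧ (G₁ * G₂ * G₁) ^ 4 = 1 := by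
  intro a G₁ G₂
  have ha : a ^ 4 = T 4 := by rw [T_pow]; norm_num
  have hG₁ : G₁ = (T (-2) : LaurentPolynomial ℤ) • !![1, -(T 4); 0, -(T 4)] := by
    rw [show G₁ = (T (-2) : LaurentPolynomial ℤ) • !![1, -(a ^ 4); 0, -(a ^ 4)] from rfl, ha]
  have hG₂ : G₂ = (T (-2) : LaurentPolynomial ℤ) • !![-(T 4), 0; -1, 1] := by
    rw [show G₂ = (T (-2) : LaurentPolynomial ℤ) • !![-(a ^ 4), 0; -1, 1] from rfl, ha]
  have h6 : (T (-2) : LaurentPolynomial ℤ) * T (-2) * T (-2) = T (-6) := by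
    rw [← T_add, ← T_add]; norm_num
  have h12 : (T (-6) : LaurentPolynomial ℤ) * T (-6) = T (-12) := by
    rw [← T_add]; norm_num
  have h24 : (T (-12) : LaurentPolynomial ℤ) * T (-12) = T (-24) := by
    rw [← T_add]; norm_num
  have hB : G₁ * G₂ * G₁ = (T (-6) : LaurentPolynomial ℤ) • !![0, T 8; T 4, 0] := by
    rw [hG₁, hG₂]
    simp only [Matrix.smul_mul, Matrix.mul_smul, smul_smul]
    rw [LM1, LM2]
    congr 1
    all_goals simp only [← T_add, ← mul_assoc]
    all_goals norm_num
  have hBB : (G₁ * G₂ * G₁) * (G₁ * G₂ * G₁) =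
      (T (-12) : LaurentPolynomial ℤ) • !![T 12, 0; 0, T 12] := by
    rw [hB]
    simp only [Matrix.smul_mul, Matrix.mul_smul, smul_smul]
    rw [LM3]
    congr 1
  refine ⟨?_, ?_, ?_, ?_⟩
  · rw [hG₁, smul_fin2', Matrix.det_fin_two_of]
    simp only [mul_neg, mul_one, neg_mul, mul_zero, zero_mul, sub_zero, neg_neg, ← T_add]
    norm_num
  · rw [hG₂, smul_fin2', Matrix.det_fin_two_of]
    simp only [mul_neg, mul_one, neg_mul, mul_zero, zero_mul, sub_zero, zero_sub, neg_neg, ← T_add]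
    norm_num
  · have h : G₁ * G₂ * G₁ ^ 2 * G₂ * G₁ = (G₁ * G₂ * G₁) * (G₁ * G₂ * G₁) := by
      rw [sq]; noncomm_ring
    rw [h, hBB]
    exact LM5 12
  · have h : (G₁ * G₂ * G₁) ^ 4 =
        ((G₁*G₂*G₁) * (G₁*G₂*G₁)) * ((G₁*G₂*G₁) * (G₁*G₂*G₁)) := by
      rw [show (4:ℕ) = 2*2 from rfl, pow_mul, sq, sq]
    rw [h, hBB]
    simp only [Matrix.smul_mul, Matrix.mul_smul, smul_smul]
    rw [LM4, h24]
    exact LM5 24
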